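/- Let a be a sink of a quiver Q, let M be a representation of Q over a field K, and let s = dim Hom(M, S_a) where S_a is the simple representation at a. Then the dimension vector of the reflected representation S_a^+ M satisfies dim(S_a^+ M) = σ_a(dim M - s·ε_a) = σ_a(dim M) + s·ε_a, where σ_a is the simple reflection on dimension vectors. -/
import Mathlib


variable (Q₀ A : Type) [Fintype Q₀] [DecidableEq Q₀] [Fintype A]

/-- The Euler form of the quiver with vertex set `Q₀` and arrow set `A`. -/
def eulerForm (src tgt : A → Q₀) (x y : Q₀ → ℤ) : ℤ :=
  (∑ i, x i * y i) - ∑ α : A, x (src α) * y (tgt α)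

/-- The `a`-th coordinate vector `ε_a`. -/
def eps (a : Q₀) : Q₀ → ℤ := fun i => if i = a then 1 else 0

/-- Let `a` be a sink of `Q`, `M` a representation with dimension vector `d`, and
`s = dim Hom(M, S_a) = dim M_a - rank φ_a`, where `φ_a : ⊕_{α : j → a} M_j → M_a`.
Then the dimension vector of the reflected representation `S_a^+ M` (which replaces `M_a` by
`ker φ_a`) equals `σ_a(d - s ε_a) = σ_a(d) + s ε_a`. -/
theorem dim_reflection_functor (K : Type) [Field K]
    (src tgt : A → Q₀) (a : Q₀) (hsink : ∀ α, src α ≠ a)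
    (V : Q₀ → Type) [∀ i, AddCommGroup (V i)] [∀ i, Module K (V i)]
    [∀ i, FiniteDimensional K (V i)]
    (m : ∀ α : A, V (src α) →ₗ[K] V (tgt α))
    (φ : (∀ α : {β : A // tgt β = a}, V (src α.1)) →ₗ[K] V a)
    (hφ : ∀ x, φ x = ∑ α : {β : A // tgt β = a}, (α.2 ▸ m α.1 (x α) : V a))
    (d : Q₀ → ℤ) (hd : ∀ i, d i = Module.finrank K (V i))
    (s : ℤ) (hs : s = Module.finrank K (V a) - Module.finrank K (LinearMap.range φ)) :
    ∀ i, (if i = a then (Module.finrank K (LinearMap.ker φ) : ℤ) else d i) =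
      d i - (eulerForm Q₀ A src tgt d (eps Q₀ a) + eulerForm Q₀ A src tgt (eps Q₀ a) d)
          * eps Q₀ a i
        + s * eps Q₀ a i := by
  intro i
  by_cases hi : i = a
  · subst hi
    -- rank-nullity
    have hrn : Module.finrank K (LinearMap.range φ) + Module.finrank K (LinearMap.ker φ)
        = Module.finrank K (∀ α : {β : A // tgt β = i}, V (src α.1)) :=
      LinearMap.finrank_range_add_finrank_ker φ
    have hdom : Module.finrank K (∀ α : {β : A // tgt β = i}, V (src α.1))
        = ∑ α : {β : A // tgt β = i}, Module.finrank K (V (src α.1)) :=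
      Module.finrank_pi_fintype K
    -- sums in the Euler forms
    have h1 : (∑ j, d j * eps Q₀ i j) = d i := by
      simp [eps, Finset.sum_ite_eq']
    have h2 : (∑ j, eps Q₀ i j * d j) = d i := by
      simp [eps, Finset.sum_ite_eq]
    have h3 : (∑ α : A, eps Q₀ i (src α) * d (tgt α)) = 0 := by
      apply Finset.sum_eq_zero
      intro α _
      simp [eps, hsink α]
    have h4 : (∑ α : A, d (src α) * eps Q₀ i (tgt α))
        = ∑ α : {β : A // tgt β = i}, d (src α.1) := by
      rw [← Finset.sum_subtype (Finset.univ.filter (fun β => tgt β = i))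
        (fun β => by simp) (fun β => d (src β)), Finset.sum_filter]
      exact Finset.sum_congr rfl fun α _ => by simp [eps, mul_ite]
    have h5 : (∑ α : {β : A // tgt β = i}, d (src α.1))
        = ∑ α : {β : A // tgt β = i}, (Module.finrank K (V (src α.1)) : ℤ) := by
      exact Finset.sum_congr rfl fun α _ => hd _
    simp only [eulerForm, eps, eq_self_iff_true, if_true]
    have h3' : (∑ α : A, (if src α = i then (1:ℤ) else 0) * d (tgt α)) = 0 := h3
    have h4' : (∑ α : A, d (src α) * (if tgt α = i then (1:ℤ) else 0))
        = ∑ α : {β : A // tgt β = i}, (Module.finrank K (V (src α.1)) : ℤ) := h4.trans h5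
    have h1' : (∑ j, d j * (if j = i then (1:ℤ) else 0)) = d i := h1
    have h2' : (∑ j, (if j = i then (1:ℤ) else 0) * d j) = d i := h2
    rw [h1', h2', h3', h4']
    have hcast : ((∑ α : {β : A // tgt β = i}, Module.finrank K (V (src α.1)) : ℕ) : ℤ)
        = ∑ α : {β : A // tgt β = i}, (Module.finrank K (V (src α.1)) : ℤ) := by
      push_cast; ring
    have hda : d i = (Module.finrank K (V i) : ℤ) := hd i
    have hrn' : (Module.finrank K (LinearMap.range φ) : ℤ)
        + (Module.finrank K (LinearMap.ker φ) : ℤ)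
        = ∑ α : {β : A // tgt β = i}, (Module.finrank K (V (src α.1)) : ℤ) := by
      rw [← hcast]
      exact_mod_cast congrArg (Nat.cast : ℕ → ℤ) (hrn.trans hdom)
    linarith [hrn', hda, hs]
  · simp [eps, hi]
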